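/- arXiv:1308.4554 — 3 statements merged into one kernel-verified Lean document; each statement's English description precedes it below -/
import Mathlib

section
/- For every p ∈ [1, ∞) and ε ∈ (0,1), the integral ∫₀^∞ (1 - e^{-t})^{p/2} / t^{1 + (1-ε)p/2} dt is finite, and moreover there exist universal constants c, C > 0 (independent of p and ε) such that c(1/ε^{1/p} + 1/(1-ε)^{1/p}) ≤ (∫₀^∞ (1 - e^{-t})^{p/2} / t^{1+(1-ε)p/2} dt)^{1/p} ≤ C(1/ε^{1/p} + 1/(1-ε)^{1/p}). -/
open MeasureTheory Real Set

lemma aux_two_mul_le_exp {x : ℝ} (hx : 0 ≤ x) : 2 * x ≤ Real.exp x := by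
  have h := Real.add_one_le_exp (x/2)
  have h2 : Real.exp x = Real.exp (x/2) * Real.exp (x/2) := by
    rw [← Real.exp_add]; ring_nf
  nlinarith [sq_nonneg (1 - x/2), Real.exp_pos (x/2)]

lemma aux_le_two_rpow {p : ℝ} (hp : 1 ≤ p) : p ≤ (2:ℝ) ^ p := by
  have hlog : (0.6931471803 : ℝ) < Real.log 2 := Real.log_two_gt_d9
  have h : (2:ℝ) ^ p = Real.exp (p * Real.log 2) := by
    rw [Real.rpow_def_of_pos (by norm_num)]; ring_nf
  rw [h]
  have := aux_two_mul_le_exp (x := p * Real.log 2) (by positivity)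
  nlinarith

lemma aux_chord {t : ℝ} (h0 : 0 ≤ t) (h1 : t ≤ 1) :
    (1 - Real.exp (-1)) * t ≤ 1 - Real.exp (-t) := by
  have := convexOn_exp.2 (Set.mem_univ (-1:ℝ)) (Set.mem_univ (0:ℝ)) h0
    (by linarith : (0:ℝ) ≤ 1 - t) (by ring)
  simp only [smul_eq_mul, mul_zero, add_zero, mul_neg_one, Real.exp_zero, mul_one] at this
  nlinarith [this]

lemma aux_main {p ε : ℝ} (hp : 1 ≤ p) (hε0 : 0 < ε) (hε1 : ε < 1) :
    IntegrableOn (fun t : ℝ => (1 - Real.exp (-t)) ^ (p/2) / t ^ (1 + (1-ε)*p/2)) (Set.Ioi 0) volume ∧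
    (1 - Real.exp (-1)) ^ (p/2) * (1/(ε*p/2)) ≤
      (∫ t in Set.Ioc (0:ℝ) 1, (1 - Real.exp (-t)) ^ (p/2) / t ^ (1 + (1-ε)*p/2)) ∧
    (∫ t in Set.Ioc (0:ℝ) 1, (1 - Real.exp (-t)) ^ (p/2) / t ^ (1 + (1-ε)*p/2)) ≤ 1/(ε*p/2) ∧
    (1 - Real.exp (-1)) ^ (p/2) * (1/((1-ε)*p/2)) ≤
      (∫ t in Set.Ioi (1:ℝ), (1 - Real.exp (-t)) ^ (p/2) / t ^ (1 + (1-ε)*p/2)) ∧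
    (∫ t in Set.Ioi (1:ℝ), (1 - Real.exp (-t)) ^ (p/2) / t ^ (1 + (1-ε)*p/2)) ≤ 1/((1-ε)*p/2) ∧
    (∫ t in Set.Ioi (0:ℝ), (1 - Real.exp (-t)) ^ (p/2) / t ^ (1 + (1-ε)*p/2)) =
      (∫ t in Set.Ioc (0:ℝ) 1, (1 - Real.exp (-t)) ^ (p/2) / t ^ (1 + (1-ε)*p/2)) +
      (∫ t in Set.Ioi (1:ℝ), (1 - Real.exp (-t)) ^ (p/2) / t ^ (1 + (1-ε)*p/2)) := by
  have hp0 : (0:ℝ) < p := by linarith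
  have h1ε : (0:ℝ) < 1 - ε := by linarith
  have hk : 0 < 1 - Real.exp (-1) := by
    have : Real.exp (-1:ℝ) < 1 := Real.exp_lt_one_iff.mpr (by norm_num)
    linarith
  set k := 1 - Real.exp (-1) with hkdef
  set f : ℝ → ℝ := fun t => (1 - Real.exp (-t)) ^ (p/2) / t ^ (1 + (1-ε)*p/2) with hfdef
  set aa := ε*p/2 with haadef
  set bb := (1-ε)*p/2 with hbbdef
  have haa : 0 < aa := by positivity
  have hbb : 0 < bb := by positivity
  -- measurability
  have hmeas : Measurable f := by
    simp only [hfdef]; fun_prop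
  have hnn : ∀ t : ℝ, 0 < t → 0 ≤ 1 - Real.exp (-t) := by
    intro t ht
    have : Real.exp (-t) ≤ 1 := Real.exp_le_one_iff.mpr (by linarith)
    linarith
  -- pointwise bounds on Ioc 0 1
  have hub1 : ∀ t ∈ Set.Ioc (0:ℝ) 1, f t ≤ t ^ (aa - 1) := by
    intro t ht
    have ht0 : 0 < t := ht.1
    have hle : 1 - Real.exp (-t) ≤ t := by
      have := Real.add_one_le_exp (-t); linarith
    have h1 : (1 - Real.exp (-t)) ^ (p/2) ≤ t ^ (p/2) :=
      Real.rpow_le_rpow (hnn t ht0) hle (by positivity)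
    have h2 : f t ≤ t ^ (p/2) / t ^ (1 + bb) := by
      simp only [hfdef]
      exact (div_le_div_iff_of_pos_right (Real.rpow_pos_of_pos ht0 _)).mpr h1
    calc f t ≤ t ^ (p/2) / t ^ (1 + bb) := h2
      _ = t ^ (p/2 - (1 + bb)) := (Real.rpow_sub ht0 _ _).symm
      _ = t ^ (aa - 1) := by rw [haadef, hbbdef]; ring_nf
  have hlb1 : ∀ t ∈ Set.Ioc (0:ℝ) 1, k ^ (p/2) * t ^ (aa - 1) ≤ f t := by
    intro t ht
    have ht0 : 0 < t := ht.1
    have hch : k * t ≤ 1 - Real.exp (-t) := aux_chord ht0.le ht.2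
    have h1 : (k * t) ^ (p/2) ≤ (1 - Real.exp (-t)) ^ (p/2) :=
      Real.rpow_le_rpow (by positivity) hch (by positivity)
    have h2 : (k * t) ^ (p/2) = k ^ (p/2) * t ^ (p/2) :=
      Real.mul_rpow hk.le ht0.le
    have h3 : k ^ (p/2) * t ^ (p/2) / t ^ (1 + bb) ≤ f t := by
      simp only [hfdef]
      refine (div_le_div_iff_of_pos_right (Real.rpow_pos_of_pos ht0 _)).mpr ?_
      rw [← h2]; exact h1
    calc k ^ (p/2) * t ^ (aa - 1)
        = k ^ (p/2) * (t ^ (p/2) / t ^ (1 + bb)) := by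
          rw [← Real.rpow_sub ht0]; congr 1; rw [haadef, hbbdef]; ring_nf
      _ = k ^ (p/2) * t ^ (p/2) / t ^ (1 + bb) := by ring
      _ ≤ f t := h3
  -- pointwise bounds on Ioi 1
  have hub2 : ∀ t ∈ Set.Ioi (1:ℝ), f t ≤ t ^ (-(1 + bb)) := by
    intro t ht
    have ht0 : (0:ℝ) < t := by simp at ht; linarith
    have h1 : (1 - Real.exp (-t)) ^ (p/2) ≤ 1 :=
      Real.rpow_le_one (hnn t ht0) (by have := Real.exp_pos (-t); linarith) (by positivity)
    calc f t ≤ 1 / t ^ (1 + bb) := by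
          simp only [hfdef]
          exact (div_le_div_iff_of_pos_right (Real.rpow_pos_of_pos ht0 _)).mpr h1
      _ = t ^ (-(1 + bb)) := by rw [Real.rpow_neg ht0.le, one_div]
  have hlb2 : ∀ t ∈ Set.Ioi (1:ℝ), k ^ (p/2) * t ^ (-(1 + bb)) ≤ f t := by
    intro t ht
    have ht1 : (1:ℝ) < t := ht
    have ht0 : (0:ℝ) < t := by linarith
    have h1 : k ≤ 1 - Real.exp (-t) := by
      have : Real.exp (-t) ≤ Real.exp (-1) := Real.exp_le_exp.mpr (by linarith)
      simp only [hkdef]; linarith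
    have h2 : k ^ (p/2) ≤ (1 - Real.exp (-t)) ^ (p/2) :=
      Real.rpow_le_rpow hk.le h1 (by positivity)
    calc k ^ (p/2) * t ^ (-(1 + bb)) = k ^ (p/2) / t ^ (1 + bb) := by
          rw [Real.rpow_neg ht0.le]; ring
      _ ≤ f t := by
          simp only [hfdef]
          exact (div_le_div_iff_of_pos_right (Real.rpow_pos_of_pos ht0 _)).mpr h2
  -- integrability of comparison functions
  have hg1 : IntegrableOn (fun t : ℝ => t ^ (aa - 1)) (Set.Ioc (0:ℝ) 1) volume := by
    have := intervalIntegral.intervalIntegrable_rpow' (a := 0) (b := 1)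
      (show (-1:ℝ) < aa - 1 by linarith)
    exact (intervalIntegrable_iff_integrableOn_Ioc_of_le (by norm_num)).mp this
  have hg2 : IntegrableOn (fun t : ℝ => t ^ (-(1 + bb))) (Set.Ioi (1:ℝ)) volume :=
    integrableOn_Ioi_rpow_of_lt (by linarith) one_pos
  -- f nonneg on positive reals
  have hfnn : ∀ t : ℝ, 0 < t → 0 ≤ f t := by
    intro t ht
    simp only [hfdef]
    exact div_nonneg (Real.rpow_nonneg (hnn t ht) _) (Real.rpow_nonneg ht.le _)
  -- integrability of f on the two pieces
  have hf1 : IntegrableOn f (Set.Ioc (0:ℝ) 1) volume := by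
    refine hg1.mono' (hmeas.aestronglyMeasurable.restrict) ?_
    rw [ae_restrict_iff' measurableSet_Ioc]
    refine Filter.Eventually.of_forall fun t ht => ?_
    rw [Real.norm_eq_abs, abs_of_nonneg (hfnn t ht.1)]
    exact hub1 t ht
  have hf2 : IntegrableOn f (Set.Ioi (1:ℝ)) volume := by
    refine hg2.mono' (hmeas.aestronglyMeasurable.restrict) ?_
    rw [ae_restrict_iff' measurableSet_Ioi]
    refine Filter.Eventually.of_forall fun t ht => ?_
    have ht0 : (0:ℝ) < t := lt_trans one_pos ht
    rw [Real.norm_eq_abs, abs_of_nonneg (hfnn t ht0)]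
    exact hub2 t ht
  have hunion : Set.Ioc (0:ℝ) 1 ∪ Set.Ioi (1:ℝ) = Set.Ioi (0:ℝ) :=
    Set.Ioc_union_Ioi_eq_Ioi (by norm_num)
  have hfint : IntegrableOn f (Set.Ioi 0) volume := by
    rw [← hunion]; exact hf1.union hf2
  -- integral values of comparison functions
  have hJ1 : (∫ t in Set.Ioc (0:ℝ) 1, t ^ (aa - 1)) = 1/aa := by
    rw [← intervalIntegral.integral_of_le (by norm_num : (0:ℝ) ≤ 1)]
    rw [integral_rpow (Or.inl (by linarith : (-1:ℝ) < aa - 1))]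
    rw [sub_add_cancel]
    rw [Real.one_rpow, Real.zero_rpow haa.ne']
    ring
  have hJ2 : (∫ t in Set.Ioi (1:ℝ), t ^ (-(1 + bb))) = 1/bb := by
    rw [integral_Ioi_rpow_of_lt (by linarith) one_pos]
    rw [Real.one_rpow]
    field_simp
    have : -(1 + bb) + 1 = -bb := by ring
    rw [this, div_neg, neg_neg, div_self hbb.ne']
  -- integral bounds
  have hI1ub : (∫ t in Set.Ioc (0:ℝ) 1, f t) ≤ 1/aa := by
    rw [← hJ1]; exact setIntegral_mono_on hf1 hg1 measurableSet_Ioc hub1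
  have hI1lb : k ^ (p/2) * (1/aa) ≤ ∫ t in Set.Ioc (0:ℝ) 1, f t := by
    have : (∫ t in Set.Ioc (0:ℝ) 1, k ^ (p/2) * t ^ (aa - 1)) = k ^ (p/2) * (1/aa) := by
      rw [MeasureTheory.integral_const_mul, hJ1]
    rw [← this]
    exact setIntegral_mono_on (hg1.const_mul _) hf1 measurableSet_Ioc hlb1
  have hI2ub : (∫ t in Set.Ioi (1:ℝ), f t) ≤ 1/bb := by
    rw [← hJ2]; exact setIntegral_mono_on hf2 hg2 measurableSet_Ioi hub2
  have hI2lb : k ^ (p/2) * (1/bb) ≤ ∫ t in Set.Ioi (1:ℝ), f t := by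
    have : (∫ t in Set.Ioi (1:ℝ), k ^ (p/2) * t ^ (-(1 + bb))) = k ^ (p/2) * (1/bb) := by
      rw [MeasureTheory.integral_const_mul, hJ2]
    rw [← this]
    exact setIntegral_mono_on (hg2.const_mul _) hf2 measurableSet_Ioi hlb2
  have hsplit : (∫ t in Set.Ioi (0:ℝ), f t) =
      (∫ t in Set.Ioc (0:ℝ) 1, f t) + (∫ t in Set.Ioi (1:ℝ), f t) := by
    rw [← hunion]
    exact setIntegral_union (Set.Ioc_disjoint_Ioi le_rfl) measurableSet_Ioi hf1 hf2
  exact ⟨hfint, hI1lb, hI1ub, hI2lb, hI2ub, hsplit⟩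

lemma aux_pair {p : ℝ} (hp : 1 ≤ p) :
    (1:ℝ)/2 ≤ (2/p) ^ ((1:ℝ)/p) ∧ (2/p) ^ ((1:ℝ)/p) ≤ 2 := by
  have hp0 : (0:ℝ) < p := by linarith
  have hip : (0:ℝ) ≤ 1/p := by positivity
  have h2p : p ≤ (2:ℝ)^p := aux_le_two_rpow hp
  have h2pos : (0:ℝ) < (2:ℝ)^p := Real.rpow_pos_of_pos (by norm_num) _
  have hpow_id : ∀ x : ℝ, 0 ≤ x → (x ^ p) ^ ((1:ℝ)/p) = x := by
    intro x hx
    rw [← Real.rpow_mul hx, mul_one_div, div_self hp0.ne', Real.rpow_one]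
  constructor
  · have hhalf : ((1:ℝ)/2) ^ p ≤ 2/p := by
      rw [Real.div_rpow (by norm_num) (by norm_num), Real.one_rpow]
      rw [div_le_div_iff₀ h2pos hp0]
      nlinarith
    calc (1:ℝ)/2 = (((1:ℝ)/2) ^ p) ^ ((1:ℝ)/p) := (hpow_id _ (by norm_num)).symm
      _ ≤ (2/p) ^ ((1:ℝ)/p) := Real.rpow_le_rpow (by positivity) hhalf hip
  · have h2 : 2/p ≤ (2:ℝ)^p := by
      calc 2/p ≤ 2 := div_le_self (by norm_num) hp
        _ = (2:ℝ)^(1:ℝ) := (Real.rpow_one 2).symm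
        _ ≤ (2:ℝ)^p := Real.rpow_le_rpow_of_exponent_le one_le_two hp
    calc (2/p) ^ ((1:ℝ)/p) ≤ ((2:ℝ)^p) ^ ((1:ℝ)/p) :=
          Real.rpow_le_rpow (by positivity) h2 hip
      _ = 2 := hpow_id 2 (by norm_num)

-- bounds for (1/(x*p/2))^(1/p)
lemma aux_piece {p x : ℝ} (hp : 1 ≤ p) (hx0 : 0 < x) :
    (1/2) * (1 / x^((1:ℝ)/p)) ≤ (1/(x*p/2)) ^ ((1:ℝ)/p) ∧
    (1/(x*p/2)) ^ ((1:ℝ)/p) ≤ 2 * (1 / x^((1:ℝ)/p)) := by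
  have hp0 : (0:ℝ) < p := by linarith
  have hxp : (0:ℝ) < x ^ ((1:ℝ)/p) := Real.rpow_pos_of_pos hx0 _
  have hsplit : (1/(x*p/2)) ^ ((1:ℝ)/p) = (1/x^((1:ℝ)/p)) * (2/p) ^ ((1:ℝ)/p) := by
    have h1 : 1/(x*p/2) = (1/x) * (2/p) := by field_simp
    rw [h1, Real.mul_rpow (by positivity) (by positivity),
      Real.div_rpow (by norm_num) hx0.le, Real.one_rpow]
  obtain ⟨hlo, hhi⟩ := aux_pair hp
  constructor
  · rw [hsplit, mul_comm ((1:ℝ)/2)]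
    exact mul_le_mul_of_nonneg_left hlo (by positivity)
  · rw [hsplit, mul_comm (2:ℝ)]
    exact mul_le_mul_of_nonneg_left hhi (by positivity)

theorem stmt2 : ∃ c C : ℝ, 0 < c ∧ 0 < C ∧ ∀ (p ε : ℝ), p ∈ Set.Ici (1:ℝ) → ε ∈ Set.Ioo (0:ℝ) 1 →
    IntegrableOn (fun t : ℝ => (1 - Real.exp (-t)) ^ (p/2) / t ^ (1 + (1-ε)*p/2)) (Set.Ioi 0) volume ∧
    c * (1 / ε ^ (1/p) + 1 / (1-ε) ^ (1/p)) ≤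
      (∫ t in Set.Ioi (0:ℝ), (1 - Real.exp (-t)) ^ (p/2) / t ^ (1 + (1-ε)*p/2)) ^ (1/p) ∧
    (∫ t in Set.Ioi (0:ℝ), (1 - Real.exp (-t)) ^ (p/2) / t ^ (1 + (1-ε)*p/2)) ^ (1/p) ≤
      C * (1 / ε ^ (1/p) + 1 / (1-ε) ^ (1/p)) := by
  have hk : 0 < 1 - Real.exp (-1) := by
    have : Real.exp (-1:ℝ) < 1 := Real.exp_lt_one_iff.mpr (by norm_num)
    linarith
  refine ⟨(1 - Real.exp (-1)) ^ ((1:ℝ)/2) / 4, 4, by positivity, by norm_num, ?_⟩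
  intro p ε hp hε
  simp only [Set.mem_Ici] at hp
  obtain ⟨hε0, hε1⟩ := hε
  have hp0 : (0:ℝ) < p := by linarith
  have h1ε : (0:ℝ) < 1 - ε := by linarith
  obtain ⟨hfint, hI1lb, hI1ub, hI2lb, hI2ub, hsplit⟩ := aux_main hp hε0 hε1
  refine ⟨hfint, ?_, ?_⟩
  all_goals {
    set I1 := (∫ t in Set.Ioc (0:ℝ) 1, (1 - Real.exp (-t)) ^ (p/2) / t ^ (1 + (1-ε)*p/2)) with hI1def
    set I2 := (∫ t in Set.Ioi (1:ℝ), (1 - Real.exp (-t)) ^ (p/2) / t ^ (1 + (1-ε)*p/2)) with hI2def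
    set I := (∫ t in Set.Ioi (0:ℝ), (1 - Real.exp (-t)) ^ (p/2) / t ^ (1 + (1-ε)*p/2)) with hIdef
    set k := 1 - Real.exp (-1) with hkdef
    set s := k ^ ((1:ℝ)/2) with hsdef
    have hK : 0 < k ^ (p/2) := Real.rpow_pos_of_pos hk _
    have hs : 0 < s := Real.rpow_pos_of_pos hk _
    have hip : (0:ℝ) ≤ 1/p := by positivity
    have hE : 0 < 1 / ε ^ ((1:ℝ)/p) := by positivity
    have hF : 0 < 1 / (1-ε) ^ ((1:ℝ)/p) := by positivity
    have haa : 0 < 1/(ε*p/2) := by positivity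
    have hbb : 0 < 1/((1-ε)*p/2) := by positivity
    have hIpos : 0 ≤ I := by
      rw [hsplit]
      have := mul_pos hK haa
      have := mul_pos hK hbb
      linarith
    have hKpow : (k ^ (p/2)) ^ ((1:ℝ)/p) = s := by
      rw [hsdef, ← Real.rpow_mul hk.le]
      congr 1
      field_simp
    first
    | · -- lower bound
        have hA : s * ((1/2) * (1 / ε ^ ((1:ℝ)/p))) ≤ I ^ ((1:ℝ)/p) := by
          have h1 : k ^ (p/2) * (1/(ε*p/2)) ≤ I := by
            rw [hsplit]
            have := mul_pos hK hbb
            linarith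
          calc s * ((1/2) * (1 / ε ^ ((1:ℝ)/p)))
              ≤ s * ((1/(ε*p/2)) ^ ((1:ℝ)/p)) :=
                mul_le_mul_of_nonneg_left (aux_piece hp hε0).1 hs.le
            _ = (k ^ (p/2) * (1/(ε*p/2))) ^ ((1:ℝ)/p) := by
                rw [Real.mul_rpow hK.le haa.le, hKpow]
            _ ≤ I ^ ((1:ℝ)/p) :=
                Real.rpow_le_rpow (by positivity) h1 hip
        have hB : s * ((1/2) * (1 / (1-ε) ^ ((1:ℝ)/p))) ≤ I ^ ((1:ℝ)/p) := by
          have h1 : k ^ (p/2) * (1/((1-ε)*p/2)) ≤ I := by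
            rw [hsplit]
            have := mul_pos hK haa
            linarith
          calc s * ((1/2) * (1 / (1-ε) ^ ((1:ℝ)/p)))
              ≤ s * ((1/((1-ε)*p/2)) ^ ((1:ℝ)/p)) :=
                mul_le_mul_of_nonneg_left (aux_piece hp h1ε).1 hs.le
            _ = (k ^ (p/2) * (1/((1-ε)*p/2))) ^ ((1:ℝ)/p) := by
                rw [Real.mul_rpow hK.le hbb.le, hKpow]
            _ ≤ I ^ ((1:ℝ)/p) :=
                Real.rpow_le_rpow (by positivity) h1 hip
        linarith
    | · -- upper bound
        have hIub : I ≤ 1/(ε*p/2) + 1/((1-ε)*p/2) := by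
          rw [hsplit]; linarith
        have h2p1 : (2:ℝ) ^ ((1:ℝ)/p) ≤ 2 := by
          calc (2:ℝ) ^ ((1:ℝ)/p) ≤ (2:ℝ) ^ (1:ℝ) :=
                Real.rpow_le_rpow_of_exponent_le one_le_two
                  (by rw [div_le_one hp0]; linarith)
            _ = 2 := Real.rpow_one 2
        rcases le_total (1/(ε*p/2)) (1/((1-ε)*p/2)) with h | h
        · have hI2 : I ≤ 2 * (1/((1-ε)*p/2)) := by linarith
          calc I ^ ((1:ℝ)/p) ≤ (2 * (1/((1-ε)*p/2))) ^ ((1:ℝ)/p) :=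
                Real.rpow_le_rpow hIpos hI2 hip
            _ = (2:ℝ) ^ ((1:ℝ)/p) * (1/((1-ε)*p/2)) ^ ((1:ℝ)/p) :=
                Real.mul_rpow (by norm_num) hbb.le
            _ ≤ 2 * (2 * (1 / (1-ε) ^ ((1:ℝ)/p))) :=
                mul_le_mul h2p1 (aux_piece hp h1ε).2 (by positivity) (by norm_num)
            _ ≤ 4 * (1 / ε ^ ((1:ℝ)/p) + 1 / (1-ε) ^ ((1:ℝ)/p)) := by linarith
        · have hI2 : I ≤ 2 * (1/(ε*p/2)) := by linarith
          calc I ^ ((1:ℝ)/p) ≤ (2 * (1/(ε*p/2))) ^ ((1:ℝ)/p) :=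
                Real.rpow_le_rpow hIpos hI2 hip
            _ = (2:ℝ) ^ ((1:ℝ)/p) * (1/(ε*p/2)) ^ ((1:ℝ)/p) :=
                Real.mul_rpow (by norm_num) haa.le
            _ ≤ 2 * (2 * (1 / ε ^ ((1:ℝ)/p))) :=
                mul_le_mul h2p1 (aux_piece hp hε0).2 (by positivity) (by norm_num)
            _ ≤ 4 * (1 / ε ^ ((1:ℝ)/p) + 1 / (1-ε) ^ ((1:ℝ)/p)) := by linarith
  }
end

section
/- The Korányi norm N on the Heisenberg group ℍ_n = ℝ^{2n+1} satisfies N(xy) ≤ N(x) + N(y) for all x, y ∈ ℝ^{2n+1}, and hence d_N(x,y) := N(x⁻¹y) defines a left-invariant metric on ℍ_n. -/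
open MeasureTheory Real

noncomputable section

/-- The Heisenberg group `ℍ_n`, presented as `ℝⁿ × ℝⁿ × ℝ ≅ ℝ^{2n+1}`. -/
abbrev Heis (n : ℕ) : Type := (Fin n → ℝ) × (Fin n → ℝ) × ℝ

/-- The Heisenberg group product. -/
def Hmul {n : ℕ} (x y : Heis n) : Heis n :=
  (x.1 + y.1, x.2.1 + y.2.1,
    x.2.2 + y.2.2 - 2 * (∑ i, x.1 i * y.2.1 i) + 2 * (∑ i, x.2.1 i * y.1 i))

/-- The Heisenberg group inverse, `x⁻¹ = -x`. -/
def Hinv {n : ℕ} (x : Heis n) : Heis n := (-x.1, -x.2.1, -x.2.2)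

/-- The Korányi norm `N(x) = (‖π(x)‖₂⁴ + x_{2n+1}²)^{1/4}`. -/
def KN {n : ℕ} (x : Heis n) : ℝ :=
  (((∑ i, x.1 i ^ 2) + ∑ i, x.2.1 i ^ 2) ^ 2 + x.2.2 ^ 2) ^ ((1:ℝ)/4)

/-- The left-invariant Korányi metric `d_N(x,y) = N(x⁻¹ y)`. -/
def dN {n : ℕ} (x y : Heis n) : ℝ := KN (Hmul (Hinv x) y)

/-- The Heisenberg dilation `δ_θ`. -/
def Hdil {n : ℕ} (θ : ℝ) (x : Heis n) : Heis n := (θ • x.1, θ • x.2.1, θ^2 * x.2.2)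

end

/-- Cauchy–Schwarz for the Hermitian inner product on `ℂⁿ`, in real coordinates. -/
lemma heis_cs (n : ℕ) (a b c d : Fin n → ℝ) :
    (∑ i, (a i * c i + b i * d i))^2 + (∑ i, (b i * c i - a i * d i))^2
      ≤ ((∑ i, a i^2) + ∑ i, b i^2) * ((∑ i, c i^2) + ∑ i, d i^2) := by
  let z : EuclideanSpace ℂ (Fin n) := WithLp.toLp 2 (fun i => ⟨a i, b i⟩)
  let w : EuclideanSpace ℂ (Fin n) := WithLp.toLp 2 (fun i => ⟨c i, d i⟩)
  have h2 : ‖(inner ℂ z w : ℂ)‖^2 ≤ (‖z‖*‖w‖)^2 :=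
    pow_le_pow_left₀ (norm_nonneg _) (norm_inner_le_norm (𝕜 := ℂ) z w) 2
  have hiz : (inner ℂ z w : ℂ) = ⟨∑ i, (a i * c i + b i * d i), ∑ i, (a i * d i - b i * c i)⟩ := by
    simp only [PiLp.inner_apply, RCLike.inner_apply]
    apply Complex.ext <;>
      simp only [Complex.re_sum, Complex.im_sum] <;>
      apply Finset.sum_congr rfl <;> intros i _ <;>
      simp [z, w, Complex.ext_iff] <;> ring
  have hneg : (∑ i, (b i * c i - a i * d i)) = - ∑ i, (a i * d i - b i * c i) := by
    rw [← Finset.sum_neg_distrib]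
    exact Finset.sum_congr rfl fun i _ => by ring
  have hnz : ‖(inner ℂ z w : ℂ)‖^2
      = (∑ i, (a i * c i + b i * d i))^2 + (∑ i, (b i * c i - a i * d i))^2 := by
    rw [hiz, Complex.sq_norm, Complex.normSq_mk, hneg]
    ring
  have hz2 : ‖z‖^2 = (∑ i, a i^2) + ∑ i, b i^2 := by
    rw [EuclideanSpace.norm_eq, Real.sq_sqrt (Finset.sum_nonneg fun i _ => sq_nonneg _),
      ← Finset.sum_add_distrib]
    exact Finset.sum_congr rfl fun i _ => by
      rw [Complex.sq_norm, Complex.normSq_mk]; ring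
  have hw2 : ‖w‖^2 = (∑ i, c i^2) + ∑ i, d i^2 := by
    rw [EuclideanSpace.norm_eq, Real.sq_sqrt (Finset.sum_nonneg fun i _ => sq_nonneg _),
      ← Finset.sum_add_distrib]
    exact Finset.sum_congr rfl fun i _ => by
      rw [Complex.sq_norm, Complex.normSq_mk]; ring
  calc _ = ‖(inner ℂ z w : ℂ)‖^2 := hnz.symm
    _ ≤ (‖z‖*‖w‖)^2 := h2
    _ = _ := by rw [mul_pow, hz2, hw2]

/-- The scalar core of the Korányi triangle inequality. -/
lemma heis_key (A B T S P Q : ℝ) (hA : 0 ≤ A) (hB : 0 ≤ B)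
    (hPQ : P^2 + Q^2 ≤ A * B) :
    ((A+B+2*P)^2 + (T+S+2*Q)^2) ^ ((1:ℝ)/4)
      ≤ (A^2+T^2) ^ ((1:ℝ)/4) + (B^2+S^2) ^ ((1:ℝ)/4) := by
  set NX := (A^2+T^2) ^ ((1:ℝ)/4) with hNXdef
  set NY := (B^2+S^2) ^ ((1:ℝ)/4) with hNYdef
  have hNX : 0 ≤ NX := Real.rpow_nonneg (by positivity) _
  have hNY : 0 ≤ NY := Real.rpow_nonneg (by positivity) _
  have hNX2 : NX^2 = Real.sqrt (A^2+T^2) := by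
    rw [Real.sqrt_eq_rpow, hNXdef, ← Real.rpow_natCast (_ ^ ((1:ℝ)/4)) 2,
      ← Real.rpow_mul (by positivity)]
    norm_num
  have hNY2 : NY^2 = Real.sqrt (B^2+S^2) := by
    rw [Real.sqrt_eq_rpow, hNYdef, ← Real.rpow_natCast (_ ^ ((1:ℝ)/4)) 2,
      ← Real.rpow_mul (by positivity)]
    norm_num
  have hA' : A ≤ NX^2 := by
    rw [hNX2]
    nlinarith [Real.sq_sqrt (show (0:ℝ) ≤ A^2+T^2 by positivity),
      Real.sqrt_nonneg (A^2+T^2), sq_nonneg (Real.sqrt (A^2+T^2) - A), sq_nonneg T]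
  have hB' : B ≤ NY^2 := by
    rw [hNY2]
    nlinarith [Real.sq_sqrt (show (0:ℝ) ≤ B^2+S^2 by positivity),
      Real.sqrt_nonneg (B^2+S^2), sq_nonneg (Real.sqrt (B^2+S^2) - B), sq_nonneg S]
  have habs : Real.sqrt ((A+B+2*P)^2+(T+S+2*Q)^2)
      ≤ Real.sqrt (A^2+T^2) + Real.sqrt (B^2+S^2) + Real.sqrt ((2*P)^2+(2*Q)^2) := by
    have h1 := norm_add_le (⟨A,T⟩ + ⟨B,S⟩) (⟨2*P,2*Q⟩ : ℂ)
    have h2 := norm_add_le (⟨A,T⟩ : ℂ) (⟨B,S⟩ : ℂ)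
    have he : (⟨A,T⟩ + ⟨B,S⟩ + ⟨2*P,2*Q⟩ : ℂ) = ⟨A+B+2*P, T+S+2*Q⟩ := by
      simp [Complex.ext_iff]
    rw [he] at h1
    simp only [Complex.norm_def, Complex.normSq_mk] at h1 h2 ⊢
    ring_nf at h1 h2 ⊢
    linarith
  have hpq : Real.sqrt ((2*P)^2+(2*Q)^2) ≤ 2 * (NX * NY) := by
    have h1 : (2*P)^2+(2*Q)^2 ≤ (2*(NX*NY))^2 := by nlinarith [sq_nonneg NX, sq_nonneg NY]
    calc Real.sqrt ((2*P)^2+(2*Q)^2) ≤ Real.sqrt ((2*(NX*NY))^2) := Real.sqrt_le_sqrt h1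
      _ = 2*(NX*NY) := Real.sqrt_sq (by positivity)
  have hmain : Real.sqrt ((A+B+2*P)^2+(T+S+2*Q)^2) ≤ (NX+NY)^2 := by
    rw [← hNX2, ← hNY2] at habs
    nlinarith [habs, hpq]
  have h4 : (A+B+2*P)^2+(T+S+2*Q)^2 ≤ (NX+NY)^4 := by
    have h0 : (0:ℝ) ≤ (A+B+2*P)^2+(T+S+2*Q)^2 := by positivity
    have := Real.sq_sqrt h0
    nlinarith [Real.sqrt_nonneg ((A+B+2*P)^2+(T+S+2*Q)^2)]
  calc ((A+B+2*P)^2 + (T+S+2*Q)^2) ^ ((1:ℝ)/4) ≤ ((NX+NY)^4) ^ ((1:ℝ)/4) :=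
        Real.rpow_le_rpow (by positivity) h4 (by norm_num)
    _ = NX+NY := by
        rw [← Real.rpow_natCast (NX+NY) 4, ← Real.rpow_mul (by positivity)]
        norm_num

lemma Hmul_assoc {n : ℕ} (x y z : Heis n) : Hmul (Hmul x y) z = Hmul x (Hmul y z) := by
  refine Prod.ext (add_assoc _ _ _) (Prod.ext (add_assoc _ _ _) ?_)
  simp only [Hmul, Pi.add_apply, add_mul, mul_add, Finset.sum_add_distrib, Finset.mul_sum]
  ring

lemma Hinv_Hmul_self {n : ℕ} (x : Heis n) : Hmul (Hinv x) x = (0, 0, 0) := by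
  refine Prod.ext (by simp [Hmul, Hinv]) (Prod.ext (by simp [Hmul, Hinv]) ?_)
  simp only [Hmul, Hinv, Pi.neg_apply, neg_mul, Finset.sum_neg_distrib]
  ring_nf
  rw [Finset.sum_congr rfl (fun i _ => mul_comm (x.1 i) (x.2.1 i))]
  ring

lemma Hmul_zero_left {n : ℕ} (y : Heis n) : Hmul (0, 0, 0) y = y := by
  refine Prod.ext (by simp [Hmul]) (Prod.ext (by simp [Hmul]) ?_)
  simp [Hmul]

lemma Hinv_Hmul {n : ℕ} (x y : Heis n) : Hinv (Hmul x y) = Hmul (Hinv y) (Hinv x) := by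
  refine Prod.ext (by simp [Hmul, Hinv]) (Prod.ext (by simp [Hmul, Hinv]) ?_)
  simp only [Hmul, Hinv, Pi.neg_apply, neg_mul, mul_neg, neg_neg, Finset.sum_neg_distrib]
  rw [Finset.sum_congr rfl (fun i _ => mul_comm (y.1 i) (x.2.1 i)),
    Finset.sum_congr rfl (fun i _ => mul_comm (y.2.1 i) (x.1 i))]
  ring

lemma Hinv_Hinv {n : ℕ} (x : Heis n) : Hinv (Hinv x) = x := by
  simp [Hinv]

lemma KN_Hinv {n : ℕ} (x : Heis n) : KN (Hinv x) = KN x := by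
  simp [KN, Hinv]

lemma Hmul_self_Hinv {n : ℕ} (x : Heis n) : Hmul x (Hinv x) = (0, 0, 0) := by
  have := Hinv_Hmul_self (Hinv x)
  rwa [Hinv_Hinv] at this

/-- The triangle inequality for the Korányi norm. -/
lemma KN_triangle {n : ℕ} (x y : Heis n) : KN (Hmul x y) ≤ KN x + KN y := by
  have h1 : ∑ i, (x.1 i + y.1 i)^2
      = ∑ i, x.1 i^2 + ∑ i, y.1 i^2 + 2*∑ i, x.1 i * y.1 i := by
    rw [Finset.mul_sum, ← Finset.sum_add_distrib, ← Finset.sum_add_distrib]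
    exact Finset.sum_congr rfl fun i _ => by ring
  have h2 : ∑ i, (x.2.1 i + y.2.1 i)^2
      = ∑ i, x.2.1 i^2 + ∑ i, y.2.1 i^2 + 2*∑ i, x.2.1 i * y.2.1 i := by
    rw [Finset.mul_sum, ← Finset.sum_add_distrib, ← Finset.sum_add_distrib]
    exact Finset.sum_congr rfl fun i _ => by ring
  have hP : ∑ i, (x.1 i * y.1 i + x.2.1 i * y.2.1 i)
      = ∑ i, x.1 i * y.1 i + ∑ i, x.2.1 i * y.2.1 i := Finset.sum_add_distrib
  have hQ : ∑ i, (x.2.1 i * y.1 i - x.1 i * y.2.1 i)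
      = ∑ i, x.2.1 i * y.1 i - ∑ i, x.1 i * y.2.1 i := Finset.sum_sub_distrib _ _
  have hbase : KN (Hmul x y)
      = ((((∑ i, x.1 i^2) + ∑ i, x.2.1 i^2) + ((∑ i, y.1 i^2) + ∑ i, y.2.1 i^2)
          + 2 * ∑ i, (x.1 i * y.1 i + x.2.1 i * y.2.1 i))^2
        + (x.2.2 + y.2.2 + 2 * ∑ i, (x.2.1 i * y.1 i - x.1 i * y.2.1 i))^2) ^ ((1:ℝ)/4) := by
    simp only [KN, Hmul, Pi.add_apply]
    congr 1
    rw [h1, h2, hP, hQ]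
    ring
  rw [hbase]
  exact heis_key _ _ _ _ _ _ (by positivity) (by positivity)
    (heis_cs n x.1 x.2.1 y.1 y.2.1)

lemma KN_eq_zero_iff {n : ℕ} (z : Heis n) : KN z = 0 ↔ z = (0, 0, 0) := by
  constructor
  · intro h
    have hb : ((∑ i, z.1 i ^2) + ∑ i, z.2.1 i^2)^2 + z.2.2^2 = 0 := by
      by_contra hne
      have hpos : (0:ℝ) < ((∑ i, z.1 i ^2) + ∑ i, z.2.1 i^2)^2 + z.2.2^2 :=
        lt_of_le_of_ne (by positivity) (Ne.symm hne)
      have := Real.rpow_pos_of_pos hpos ((1:ℝ)/4)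
      rw [← KN] at this
      linarith
    have hs1 : (0:ℝ) ≤ ∑ i, z.1 i^2 := Finset.sum_nonneg fun i _ => sq_nonneg _
    have hs2 : (0:ℝ) ≤ ∑ i, z.2.1 i^2 := Finset.sum_nonneg fun i _ => sq_nonneg _
    have h3 : z.2.2 = 0 := by nlinarith [sq_nonneg ((∑ i, z.1 i ^2) + ∑ i, z.2.1 i^2)]
    have hsum : (∑ i, z.1 i^2) + ∑ i, z.2.1 i^2 = 0 := by nlinarith [sq_nonneg z.2.2]
    have hz1 : ∑ i, z.1 i^2 = 0 := by linarith
    have hz2 : ∑ i, z.2.1 i^2 = 0 := by linarith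
    refine Prod.ext (funext fun i => ?_) (Prod.ext (funext fun i => ?_) h3)
    · have := (Finset.sum_eq_zero_iff_of_nonneg (fun i _ => sq_nonneg (z.1 i))).1 hz1 i
        (Finset.mem_univ i)
      exact pow_eq_zero_iff (two_ne_zero) |>.1 this
    · have := (Finset.sum_eq_zero_iff_of_nonneg (fun i _ => sq_nonneg (z.2.1 i))).1 hz2 i
        (Finset.mem_univ i)
      exact pow_eq_zero_iff (two_ne_zero) |>.1 this
  · rintro rfl
    simp only [KN]
    norm_num

theorem stmt4 (n : ℕ) :
    (∀ x y : Heis n, KN (Hmul x y) ≤ KN x + KN y) ∧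
    (∀ x y : Heis n, dN x y = 0 ↔ x = y) ∧
    (∀ x y : Heis n, dN x y = dN y x) ∧
    (∀ x y z : Heis n, dN x z ≤ dN x y + dN y z) ∧
    (∀ a x y : Heis n, dN (Hmul a x) (Hmul a y) = dN x y) := by
  refine ⟨fun x y => KN_triangle x y, ?_, ?_, ?_, ?_⟩
  · intro x y
    rw [dN, KN_eq_zero_iff]
    constructor
    · intro h
      have h1 : -x.1 + y.1 = 0 := congrArg Prod.fst h
      have h2 : -x.2.1 + y.2.1 = 0 := congrArg (fun p => p.2.1) h
      have h3 := congrArg (fun p => p.2.2) h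
      have e1 : x.1 = y.1 := by
        have := neg_add_eq_zero.1 h1; exact this
      have e2 : x.2.1 = y.2.1 := by
        have := neg_add_eq_zero.1 h2; exact this
      refine Prod.ext e1 (Prod.ext e2 ?_)
      simp only [Hmul, Hinv, Pi.neg_apply, neg_mul, Finset.sum_neg_distrib] at h3
      rw [← e1, ← e2] at h3
      have hc : ∑ i, x.1 i * x.2.1 i = ∑ i, x.2.1 i * x.1 i :=
        Finset.sum_congr rfl fun i _ => mul_comm _ _
      nlinarith [h3, hc]
    · rintro rfl
      exact Hinv_Hmul_self x
  · intro x y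
    rw [dN, dN, ← KN_Hinv (Hmul (Hinv x) y), Hinv_Hmul, Hinv_Hinv]
  · intro x y z
    have h := KN_triangle (Hmul (Hinv x) y) (Hmul (Hinv y) z)
    have he : Hmul (Hmul (Hinv x) y) (Hmul (Hinv y) z) = Hmul (Hinv x) z := by
      rw [Hmul_assoc, ← Hmul_assoc y, Hmul_self_Hinv, Hmul_zero_left]
    rwa [he] at h
  · intro a x y
    rw [dN, dN, Hinv_Hmul, Hmul_assoc, ← Hmul_assoc (Hinv a), Hinv_Hmul_self, Hmul_zero_left]
end

section
/- Let g(x) = e^{-‖x‖₂²/2} on ℝⁿ and let σ_λ be the Schrödinger representation of ℍ_n on L²(ℝⁿ,ℂ). Then for every (u,v,w) ∈ ℍ_n and λ > 0, ‖g - σ_λ(u,v,w)g‖²_{L²(ℝⁿ)} = 2π^{n/2}(1 - e^{-λ(‖u‖₂² + ‖v‖₂²)} cos(λw)). -/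
open MeasureTheory Real

noncomputable section

/-- The Schrödinger representation `σ_λ` of `ℍ_n` on `L²(ℝⁿ, ℂ)`:
`(σ_λ(u,v,w)h)(x) = exp(iλ(w - 2⟨u,v⟩) + 2i√λ⟨v,x⟩) h(x - 2√λ u)`. -/
def schrodinger {n : ℕ} (lam : ℝ) (g : Heis n) (h : (Fin n → ℝ) → ℂ) : (Fin n → ℝ) → ℂ :=
  fun x => Complex.exp (Complex.I *
      (((lam * (g.2.2 - 2 * ∑ i, g.1 i * g.2.1 i) : ℝ) : ℂ) +
        ((2 * Real.sqrt lam * ∑ i, g.2.1 i * x i : ℝ) : ℂ))) *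
    h (x - (2 * Real.sqrt lam) • g.1)

end

/-- The Gaussian `g(x) = e^{-‖x‖₂²/2}`, viewed as a complex-valued function on `ℝⁿ`. -/
noncomputable def gauss (n : ℕ) : (Fin n → ℝ) → ℂ :=
  fun x => ((Real.exp (-(∑ i, x i ^ 2) / 2) : ℝ) : ℂ)

lemma aux_norm (a r t : ℝ) :
    ‖(a:ℂ) - Complex.exp (↑t * Complex.I) * r‖^2 = a^2 + r^2 - 2*(a*r)*Real.cos t := by
  rw [← Complex.normSq_eq_norm_sq, Complex.normSq_apply]
  simp [Complex.exp_mul_I, Complex.cos_ofReal_re, Complex.sin_ofReal_re, Complex.add_re,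
    Complex.add_im, Complex.mul_re, Complex.mul_im]
  nlinarith [Real.sin_sq_add_cos_sq t]

lemma aux_re (ρ t : ℝ) : (Complex.exp (↑ρ + ↑t*Complex.I)).re = Real.exp ρ * Real.cos t := by
  simp [Complex.exp_re]

theorem stmt17 (n : ℕ) (lam : ℝ) (hlam : 0 < lam) (g : Heis n) :
    ∫ x : Fin n → ℝ, ‖gauss n x - schrodinger lam g (gauss n) x‖ ^ 2 =
      2 * Real.pi ^ ((n:ℝ)/2) *
        (1 - Real.exp (-lam * ((∑ i, g.1 i ^ 2) + ∑ i, g.2.1 i ^ 2)) * Real.cos (lam * g.2.2)) := by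
  obtain ⟨u, v, w⟩ := g
  set s := Real.sqrt lam with hs
  have hs2 : s^2 = lam := Real.sq_sqrt hlam.le
  set A : ℝ := lam * (w - 2 * ∑ i, u i * v i) with hA
  set c : Fin n → ℂ := fun i => ((2*s*u i : ℝ) : ℂ) + ((2*s*v i : ℝ) : ℂ) * Complex.I with hc
  set d : Fin n → ℂ := fun i => ((-(2*lam*(u i)^2) : ℝ) : ℂ) with hd
  -- Pointwise identity for the integrand.
  have key : ∀ x : Fin n → ℝ,
      ‖gauss n x - schrodinger lam (u,v,w) (gauss n) x‖ ^ 2 =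
      (∏ i, Real.exp (-(x i)^2)) + (∏ i, Real.exp (-(x i - 2*s*u i)^2))
      - 2 * (Complex.exp ((A:ℝ) * Complex.I)
          * ∏ i, Complex.exp (-1*(x i:ℂ)^2 + c i * (x i) + d i)).re := by
    intro x
    have hexp : Complex.I * (((lam * (w - 2 * ∑ i, u i * v i) : ℝ) : ℂ) +
        ((2 * s * ∑ i, v i * x i : ℝ) : ℂ)) =
        ((A + 2*s*∑ i, v i * x i : ℝ) : ℂ) * Complex.I := by
      push_cast [hA]; ring
    have hterm : ∀ i ∈ (Finset.univ : Finset (Fin n)), -1*(x i:ℂ)^2 + c i * (x i) + d i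
        = ((-(x i^2)/2 + -((x i - 2*s*u i)^2)/2 : ℝ) : ℂ)
          + ((2*s*(v i * x i) : ℝ):ℂ) * Complex.I := by
      intro i _
      simp only [hc, hd]
      rw [show lam = s^2 from hs2.symm]
      push_cast; ring
    have harg : (A:ℂ)*Complex.I + ∑ i, (-1*(x i:ℂ)^2 + c i*(x i) + d i)
        = ((-(∑ i, x i^2)/2 + -(∑ i, (x i - 2*s*u i)^2)/2 : ℝ):ℂ)
          + ((A + 2*s*∑ i, v i * x i : ℝ):ℂ) * Complex.I := by
      rw [Finset.sum_congr rfl hterm, Finset.sum_add_distrib, ← Finset.sum_mul,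
        ← Complex.ofReal_sum, ← Complex.ofReal_sum,
        show ∑ i, (-(x i^2)/2 + -((x i - 2*s*u i)^2)/2)
            = -(∑ i, x i^2)/2 + -(∑ i, (x i - 2*s*u i)^2)/2 from by
          rw [Finset.sum_add_distrib, ← Finset.sum_div, ← Finset.sum_div,
            ← Finset.sum_neg_distrib, ← Finset.sum_neg_distrib],
        show ∑ i, 2*s*(v i * x i) = 2*s*∑ i, v i * x i from by rw [Finset.mul_sum]]
      push_cast; ring
    rw [show schrodinger lam (u,v,w) (gauss n) x =
        Complex.exp (((A + 2*s*∑ i, v i * x i : ℝ) : ℂ) * Complex.I) *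
          ((Real.exp (-(∑ i, (x i - 2*s*u i)^2) / 2) : ℝ) : ℂ) from by
      simp only [schrodinger, gauss, ← hs, hexp]
      congr 2]
    rw [gauss, aux_norm]
    have e1 : Real.exp (-(∑ i, x i ^ 2) / 2) ^ 2 = ∏ i, Real.exp (-(x i)^2) := by
      rw [← Real.exp_sum, sq, ← Real.exp_add, Finset.sum_neg_distrib]
      congr 1; ring
    have e2 : Real.exp (-(∑ i, (x i - 2*s*u i) ^ 2) / 2) ^ 2
        = ∏ i, Real.exp (-(x i - 2*s*u i)^2) := by
      rw [← Real.exp_sum, sq, ← Real.exp_add, Finset.sum_neg_distrib]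
      congr 1; ring
    rw [e1, e2, ← Complex.exp_sum, ← Complex.exp_add, harg, aux_re, ← Real.exp_add]
    ring
  -- Integrability of the pieces.
  have hq : ∀ i : Fin n, Integrable (fun t : ℝ => Complex.exp (-1*(t:ℂ)^2 + c i * t + d i)) := by
    intro i
    simpa using integrable_cexp_quadratic (b := 1) (by norm_num) (c i) (d i)
  have hG : Integrable (fun x : Fin n → ℝ => Complex.exp ((A:ℝ) * Complex.I)
      * ∏ i, Complex.exp (-1*(x i:ℂ)^2 + c i * (x i) + d i)) :=
    (Integrable.fintype_prod (f := fun i (t:ℝ) => Complex.exp (-1*(t:ℂ)^2 + c i * t + d i))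
      hq).const_mul _
  have hI3 : Integrable (fun x : Fin n → ℝ => (Complex.exp ((A:ℝ) * Complex.I)
      * ∏ i, Complex.exp (-1*(x i:ℂ)^2 + c i * (x i) + d i)).re) := by
    simpa using hG.re
  have hI1 : Integrable (fun x : Fin n → ℝ => ∏ i, Real.exp (-(x i)^2)) :=
    Integrable.fintype_prod (f := fun _ (t:ℝ) => Real.exp (-t^2))
      (fun i => by simpa using integrable_exp_neg_mul_sq one_pos)
  have hI2 : Integrable (fun x : Fin n → ℝ => ∏ i, Real.exp (-(x i - 2*s*u i)^2)) :=
    Integrable.fintype_prod (f := fun i (t:ℝ) => Real.exp (-(t - 2*s*u i)^2))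
      (fun i => by
        have := (integrable_exp_neg_mul_sq (b := 1) one_pos).comp_sub_right (2*s*u i)
        simpa using this)
  -- 1-dimensional Gaussian integrals.
  have g1 : ∫ t : ℝ, Real.exp (-t^2) = Real.sqrt π := by
    simpa using integral_gaussian 1
  have g2 : ∀ i : Fin n, ∫ t : ℝ, Real.exp (-(t - 2*s*u i)^2) = Real.sqrt π := by
    intro i
    rw [show (fun t : ℝ => Real.exp (-(t - 2*s*u i)^2))
        = fun t => (fun y : ℝ => Real.exp (-y^2)) (t - 2*s*u i) from rfl]
    rw [integral_sub_right_eq_self (fun y : ℝ => Real.exp (-y^2)) (2*s*u i)]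
    exact g1
  have gq : ∀ i : Fin n, ∫ t : ℝ, Complex.exp (-1*(t:ℂ)^2 + c i * t + d i)
      = (Real.pi : ℂ) ^ (1/2 : ℂ) * Complex.exp (d i + (c i)^2/4) := by
    intro i
    rw [show (fun t : ℝ => Complex.exp (-1*(t:ℂ)^2 + c i * t + d i))
        = fun t : ℝ => Complex.exp ((-1:ℂ)*(t:ℂ)^2 + c i * t + d i) from rfl,
      integral_cexp_quadratic (b := -1) (by norm_num) (c i) (d i)]
    congr 1
    · norm_num
    · congr 1; ring
  -- The value of the complex integral.
  have hGval : (∫ x : Fin n → ℝ, Complex.exp ((A:ℝ) * Complex.I)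
      * ∏ i, Complex.exp (-1*(x i:ℂ)^2 + c i * (x i) + d i))
      = ((Real.pi ^ ((1:ℝ)/2) : ℝ)^n : ℂ) *
        Complex.exp (((-lam*((∑ i, u i^2) + ∑ i, v i^2) : ℝ) : ℂ)
          + ((lam*w : ℝ):ℂ) * Complex.I) := by
    rw [integral_const_mul,
      integral_fintype_prod_volume_eq_prod
        (f := fun i (t:ℝ) => Complex.exp (-1*(t:ℂ)^2 + c i * t + d i))]
    simp_rw [gq]
    have hterm2 : ∀ i ∈ (Finset.univ : Finset (Fin n)), d i + (c i)^2/4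
        = ((-lam*(u i)^2 - lam*(v i)^2 : ℝ):ℂ) + ((2*lam*(u i * v i) : ℝ):ℂ)*Complex.I := by
      intro i _
      simp only [hc, hd]
      rw [show lam = s^2 from hs2.symm]
      push_cast
      ring_nf
      rw [Complex.I_sq]
      ring
    have hsum2 : ∑ i, (d i + (c i)^2/4)
        = ((-lam*((∑ i, u i^2) + ∑ i, v i^2) : ℝ):ℂ)
          + ((2*lam*∑ i, u i * v i : ℝ):ℂ)*Complex.I := by
      rw [Finset.sum_congr rfl hterm2, Finset.sum_add_distrib, ← Finset.sum_mul,
        ← Complex.ofReal_sum, ← Complex.ofReal_sum,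
        show ∑ i, (-lam*(u i)^2 - lam*(v i)^2) = -lam*((∑ i, u i^2) + ∑ i, v i^2) from by
          rw [Finset.sum_sub_distrib, ← Finset.mul_sum, ← Finset.mul_sum]; ring,
        show ∑ i, 2*lam*(u i * v i) = 2*lam*∑ i, u i * v i from by rw [Finset.mul_sum]]
    have hbase : ((Real.pi : ℂ))^(1/2:ℂ) = ((π^((1:ℝ)/2) : ℝ) : ℂ) := by
      rw [Complex.ofReal_cpow Real.pi_pos.le]; norm_num
    rw [Finset.prod_mul_distrib, Finset.prod_const, ← Complex.exp_sum, hsum2, hbase,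
      mul_left_comm, ← Complex.exp_add, ← Complex.ofReal_pow]
    congr 1
    · simp
    · congr 1
      push_cast [hA]
      ring
  -- Put everything together.
  have hrepl : ∫ x : Fin n → ℝ, (Complex.exp ((A:ℝ) * Complex.I)
      * ∏ i, Complex.exp (-1*(x i:ℂ)^2 + c i * (x i) + d i)).re
      = (Real.pi ^ ((1:ℝ)/2))^n *
        (Real.exp (-lam*((∑ i, u i^2) + ∑ i, v i^2)) * Real.cos (lam*w)) := by
    have h := integral_re (𝕜 := ℂ) hG
    simp only [RCLike.re_to_complex] at h
    rw [h, hGval, show ((Real.pi ^ ((1:ℝ)/2) : ℝ)^n : ℂ)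
        = ((((Real.pi ^ ((1:ℝ)/2))^n : ℝ)) : ℂ) from by push_cast; ring,
      Complex.re_ofReal_mul, aux_re]
  have hI12 : Integrable (fun x : Fin n → ℝ =>
      (∏ i, Real.exp (-(x i)^2)) + ∏ i, Real.exp (-(x i - 2*s*u i)^2)) := hI1.add hI2
  have hI3' : Integrable (fun x : Fin n → ℝ => 2 * (Complex.exp ((A:ℝ) * Complex.I)
      * ∏ i, Complex.exp (-1*(x i:ℂ)^2 + c i * (x i) + d i)).re) := hI3.const_mul 2
  simp_rw [key]
  rw [integral_sub hI12 hI3', integral_add hI1 hI2,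
    integral_const_mul, hrepl,
    integral_fintype_prod_volume_eq_prod (f := fun _ (t:ℝ) => Real.exp (-t^2)),
    integral_fintype_prod_volume_eq_prod (f := fun i (t:ℝ) => Real.exp (-(t - 2*s*u i)^2))]
  simp_rw [g1, g2]
  simp only [Finset.prod_const, Finset.card_univ, Fintype.card_fin]
  have hpow1 : (Real.sqrt π)^n = π ^ ((n:ℝ)/2) := by
    rw [Real.sqrt_eq_rpow, show ((n:ℝ)/2) = (1/2:ℝ)*(n:ℝ) by ring,
      Real.rpow_mul Real.pi_pos.le, Real.rpow_natCast]
  have hpow2 : (π ^ ((1:ℝ)/2))^n = π ^ ((n:ℝ)/2) := by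
    rw [show ((n:ℝ)/2) = (1/2:ℝ)*(n:ℝ) by ring,
      Real.rpow_mul Real.pi_pos.le, Real.rpow_natCast]
  rw [hpow1, hpow2]
  ring
end
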